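/- Let γ be a specification and 𝒢(γ) ≠ ∅ the convex set of consistent probability measures. A measure μ ∈ 𝒢(γ) is an extreme point of 𝒢(γ) if and only if μ is trivial on the tail σ-algebra ℱ_∞, i.e. μ(B) ∈ {0,1} for every tail event B. -/

import Mathlib

open MeasureTheory
open scoped ENNReal

/-- A specification: a family `γ = (γ_Λ)_{Λ finite}` of proper probability
kernels from `(Ω, ℱ_{Λᶜ})` to `(Ω, ℱ)` satisfying the consistency condition
`γ_Λ γ_{Λ'} = γ_Λ` for `Λ' ⊆ Λ`. -/
structure Specification (E S : Type*) [MeasurableSpace E] where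
  ker : Finset S → (S → E) → Measure (S → E)
  isProb : ∀ (Λ : Finset S) (ω : S → E), IsProbabilityMeasure (ker Λ ω)
  meas : ∀ (Λ : Finset S) (A : Set (S → E)), MeasurableSet A →
    Measurable[MeasureTheory.cylinderEvents ((↑Λ : Set S)ᶜ)] (fun ω => ker Λ ω A)
  proper : ∀ (Λ : Finset S) (ω : S → E) (B : Set (S → E)),
    MeasurableSet[MeasureTheory.cylinderEvents ((↑Λ : Set S)ᶜ)] B →
      ker Λ ω B = B.indicator (fun _ => (1 : ℝ≥0∞)) ω
  consistent : ∀ (Λ' Λ : Finset S), Λ' ⊆ Λ → ∀ (ω : S → E) (A : Set (S → E)),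
    MeasurableSet A → ∫⁻ ω', ker Λ' ω' A ∂(ker Λ ω) = ker Λ ω A

/-- `μ ∈ 𝒢(γ)`: the probability measure `μ` is consistent with (specified by)
the specification `γ`, i.e. `μ γ_Λ = μ` for all finite `Λ`. -/
def IsGibbsFor {E S : Type*} [MeasurableSpace E] (γ : Specification E S)
    (μ : Measure (S → E)) : Prop :=
  IsProbabilityMeasure μ ∧ ∀ (Λ : Finset S) (A : Set (S → E)), MeasurableSet A →
    ∫⁻ ω, γ.ker Λ ω A ∂μ = μ A

/-- The tail σ-algebra `ℱ_∞ = ⋂_{Λ finite} ℱ_{Λᶜ}`. -/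
def tailSigma (E S : Type*) [MeasurableSpace E] : MeasurableSpace (S → E) :=
  ⨅ Λ : Finset S, MeasureTheory.cylinderEvents ((↑Λ : Set S)ᶜ)

section Aux

variable {E S : Type*} [MeasurableSpace E]

private lemma hle (Λ : Finset S) :
    MeasureTheory.cylinderEvents ((↑Λ : Set S)ᶜ) ≤ (MeasurableSpace.pi : MeasurableSpace (S → E)) :=
  cylinderEvents_le_pi

/-- Multiplicativity of a proper kernel: for `s ∈ ℱ_{Λᶜ}`,
`γ_Λ(ω, A ∩ s) = 1_s(ω) γ_Λ(ω, A)`. -/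
lemma ker_inter (γ : Specification E S) (Λ : Finset S) (ω : S → E)
    (A : Set (S → E)) {s : Set (S → E)}
    (hs : MeasurableSet[MeasureTheory.cylinderEvents ((↑Λ : Set S)ᶜ)] s) :
    γ.ker Λ ω (A ∩ s) = s.indicator (fun _ => γ.ker Λ ω A) ω := by
  have hs' : MeasurableSet s := hle Λ s hs
  haveI := γ.isProb Λ ω
  by_cases hω : ω ∈ s
  · rw [Set.indicator_of_mem hω]
    have hcompl : γ.ker Λ ω sᶜ = 0 := by
      rw [γ.proper Λ ω sᶜ hs.compl, Set.indicator_of_notMem (by simpa using hω)]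
    have h1 : γ.ker Λ ω (A ∩ s) + γ.ker Λ ω (A \ s) = γ.ker Λ ω A :=
      measure_inter_add_diff A hs'
    have h2 : γ.ker Λ ω (A \ s) = 0 :=
      le_antisymm ((measure_mono (fun x hx => hx.2)).trans hcompl.le) (zero_le)
    rw [h2, add_zero] at h1
    exact h1
  · rw [Set.indicator_of_notMem hω]
    have h0 : γ.ker Λ ω s = 0 := by
      rw [γ.proper Λ ω s hs, Set.indicator_of_notMem hω]
    exact le_antisymm ((measure_mono Set.inter_subset_right).trans h0.le) (zero_le)

lemma lintegral_indicator_mul_ker (γ : Specification E S) (Λ : Finset S) (ω : S → E)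
    {A : Set (S → E)} (hA : MeasurableSet A) {h : (S → E) → ℝ≥0∞}
    (hh : Measurable[MeasureTheory.cylinderEvents ((↑Λ : Set S)ᶜ)] h) :
    ∫⁻ x, A.indicator h x ∂(γ.ker Λ ω) = γ.ker Λ ω A * h ω := by
  have htrim : ((γ.ker Λ ω).restrict A).trim (hle Λ)
      = ((γ.ker Λ ω A) • Measure.dirac ω).trim (hle Λ) := by
    refine @Measure.ext _ (MeasureTheory.cylinderEvents ((↑Λ : Set S)ᶜ)) _ _ fun s hs => ?_
    rw [trim_measurableSet_eq _ hs, trim_measurableSet_eq _ hs]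
    have hs' : MeasurableSet s := hle Λ s hs
    rw [Measure.restrict_apply hs', Set.inter_comm, ker_inter γ Λ ω A hs,
      Measure.smul_apply, smul_eq_mul, Measure.dirac_apply' _ hs']
    by_cases hω : ω ∈ s <;>
      simp [Set.indicator_of_mem, Set.indicator_of_notMem, hω]
  calc ∫⁻ x, A.indicator h x ∂(γ.ker Λ ω)
      = ∫⁻ x in A, h x ∂(γ.ker Λ ω) := lintegral_indicator hA h
    _ = ∫⁻ x, h x ∂(((γ.ker Λ ω).restrict A).trim (hle Λ)) := (lintegral_trim _ hh).symm
    _ = ∫⁻ x, h x ∂((((γ.ker Λ ω A) • Measure.dirac ω)).trim (hle Λ)) := by rw [htrim]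
    _ = ∫⁻ x, h x ∂((γ.ker Λ ω A) • Measure.dirac ω) := lintegral_trim _ hh
    _ = γ.ker Λ ω A * ∫⁻ x, h x ∂(Measure.dirac ω) := lintegral_smul_measure _ _
    _ = γ.ker Λ ω A * h ω := by rw [lintegral_dirac' ω (hh.mono (hle Λ) le_rfl)]

lemma measurable_ker (γ : Specification E S) (Λ : Finset S) : Measurable (γ.ker Λ) :=
  Measure.measurable_of_measurable_coe _ fun s hs =>
    (γ.meas Λ s hs).mono (hle Λ) le_rfl

lemma bind_eq_self {γ : Specification E S} {μ : Measure (S → E)}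
    (hμ : IsGibbsFor γ μ) (Λ : Finset S) : μ.bind (γ.ker Λ) = μ := by
  ext s hs
  rw [Measure.bind_apply hs (measurable_ker γ Λ).aemeasurable, hμ.2 Λ s hs]

lemma lintegral_gibbs {γ : Specification E S} {μ : Measure (S → E)}
    (hμ : IsGibbsFor γ μ) (Λ : Finset S) {f : (S → E) → ℝ≥0∞} (hf : Measurable f) :
    ∫⁻ ω, ∫⁻ x, f x ∂(γ.ker Λ ω) ∂μ = ∫⁻ x, f x ∂μ := by
  conv_rhs => rw [← bind_eq_self hμ Λ]
  rw [Measure.lintegral_bind (measurable_ker γ Λ).aemeasurable hf.aemeasurable]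

/-- If `ν ≪ μ` are both Gibbs for `γ`, then `ν` has a `ℱ_{Λᶜ}`-measurable density
with respect to `μ`, for every `Λ`. -/
lemma exists_density {γ : Specification E S} {μ ν : Measure (S → E)}
    (hμ : IsGibbsFor γ μ) (hν : IsGibbsFor γ ν) (hac : ν ≪ μ) (Λ : Finset S) :
    ∃ g : (S → E) → ℝ≥0∞, Measurable[MeasureTheory.cylinderEvents ((↑Λ : Set S)ᶜ)] g ∧
      ν = μ.withDensity g := by
  haveI := hμ.1
  haveI := hν.1
  set g := (ν.trim (hle Λ)).rnDeriv (μ.trim (hle Λ)) with hgdef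
  have hgm : Measurable[MeasureTheory.cylinderEvents ((↑Λ : Set S)ᶜ)] g :=
    Measure.measurable_rnDeriv _ _
  have hgm' : Measurable g := hgm.mono (hle Λ) le_rfl
  have hwd : (μ.trim (hle Λ)).withDensity g = ν.trim (hle Λ) :=
    Measure.withDensity_rnDeriv_eq _ _ (hac.trim (hle Λ))
  have key : ∀ h : (S → E) → ℝ≥0∞,
      Measurable[MeasureTheory.cylinderEvents ((↑Λ : Set S)ᶜ)] h →
      ∫⁻ x, h x ∂ν = ∫⁻ x, g x * h x ∂μ := by
    intro h hh
    rw [← lintegral_trim (hle Λ) hh, ← hwd,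
      lintegral_withDensity_eq_lintegral_mul _ hgm hh]
    simp only [Pi.mul_apply]
    exact lintegral_trim _ (hgm.mul hh)
  refine ⟨g, hgm, ?_⟩
  ext A hA
  have h1 : ν A = ∫⁻ ω, g ω * γ.ker Λ ω A ∂μ := by
    rw [← hν.2 Λ A hA]
    exact key _ (γ.meas Λ A hA)
  have h2 : (μ.withDensity g) A = ∫⁻ ω, g ω * γ.ker Λ ω A ∂μ := by
    rw [withDensity_apply _ hA, ← lintegral_indicator hA,
      ← lintegral_gibbs hμ Λ (hgm'.indicator hA)]
    refine lintegral_congr fun ω => ?_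
    rw [lintegral_indicator_mul_ker γ Λ ω hA hgm, mul_comm]
  rw [h1, h2]

end Aux

section TailTrivImpliesEq

variable {E S : Type*} [MeasurableSpace E] [Countable S]

lemma nu_eq_mu {γ : Specification E S} {μ ν : Measure (S → E)}
    (hμ : IsGibbsFor γ μ) (hν : IsGibbsFor γ ν) (hac : ν ≪ μ)
    (htriv : ∀ B : Set (S → E), MeasurableSet[tailSigma E S] B → μ B = 0 ∨ μ B = 1) :
    ν = μ := by
  haveI := hμ.1
  haveI := hν.1
  -- a monotone cofinal sequence of finsets
  obtain ⟨f0, hf0⟩ := Countable.exists_injective_nat S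
  have hfin : ∀ n : ℕ, (f0 ⁻¹' Set.Iic n).Finite := fun n =>
    Set.Finite.preimage (Set.injOn_of_injective hf0) (Set.finite_Iic n)
  set F : ℕ → Finset S := fun n => (hfin n).toFinset with hF
  have hFmono : ∀ m n : ℕ, m ≤ n → F m ⊆ F n := by
    intro m n hmn s hs
    simp only [hF, Set.Finite.mem_toFinset, Set.mem_preimage, Set.mem_Iic] at *
    omega
  have hFcof : ∀ Λ : Finset S, Λ ⊆ F (Λ.sup f0) := by
    intro Λ s hs
    simp only [hF, Set.Finite.mem_toFinset, Set.mem_preimage, Set.mem_Iic]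
    exact Finset.le_sup hs
  -- densities
  have hdens := fun n => exists_density hμ hν hac (F n)
  choose g hgm hgd using hdens
  have hgm' : ∀ n, Measurable (g n) := fun n => (hgm n).mono (hle (F n)) le_rfl
  have hae : ∀ n, g n =ᵐ[μ] g 0 := by
    intro n
    refine ae_eq_of_forall_setLIntegral_eq_of_sigmaFinite (hgm' n) (hgm' 0)
      fun s hs _ => ?_
    rw [← withDensity_apply _ hs, ← withDensity_apply _ hs, ← hgd n, ← hgd 0]
  -- tail triviality transfer
  have tail01 : ∀ A : ℕ → Set (S → E),
      (∀ n, MeasurableSet[MeasureTheory.cylinderEvents ((↑(F n) : Set S)ᶜ)] (A n)) →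
      (∀ n, (A n : Set (S → E)) =ᵐ[μ] A 0) → μ (A 0) = 0 ∨ μ (A 0) = 1 := by
    intro A hAm hAe
    set B : Set (S → E) := ⋂ m, ⋃ n, A (m + n) with hB
    have hBA : (A 0 : Set (S → E)) =ᵐ[μ] B := by
      have h' : ∀ᵐ x ∂μ, ∀ n, x ∈ A n ↔ x ∈ A 0 := by
        rw [ae_all_iff]
        intro n
        filter_upwards [hAe n] with x hx
        exact iff_of_eq hx
      filter_upwards [h'] with x hx
      show (x ∈ A 0) = (x ∈ B)
      simp only [hB, Set.mem_iInter, Set.mem_iUnion, eq_iff_iff]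
      constructor
      · intro h0 m; exact ⟨0, (hx (m + 0)).2 h0⟩
      · intro h; obtain ⟨n, hn⟩ := h 0; exact (hx (0 + n)).1 hn
    have hBtail : MeasurableSet[tailSigma E S] B := by
      rw [tailSigma, MeasurableSpace.measurableSet_iInf]
      intro Λ
      set N := Λ.sup f0 with hN
      have hsub : ∀ k, N ≤ k →
          (MeasureTheory.cylinderEvents ((↑(F k) : Set S)ᶜ) : MeasurableSpace (S → E)) ≤
            MeasureTheory.cylinderEvents ((↑Λ : Set S)ᶜ) := by
        intro k hk
        refine cylinderEvents_mono (X := fun _ : S => E) (Set.compl_subset_compl.2 ?_)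
        exact fun s hs => hFmono N k hk (hFcof Λ hs)
      have hBeq : B = ⋂ m, ⋃ n, A (N + m + n) := by
        apply Set.Subset.antisymm
        · intro x hx
          simp only [hB, Set.mem_iInter, Set.mem_iUnion] at *
          intro m
          obtain ⟨n, hn⟩ := hx (N + m)
          exact ⟨n, hn⟩
        · intro x hx
          simp only [hB, Set.mem_iInter, Set.mem_iUnion] at *
          intro m
          obtain ⟨n, hn⟩ := hx m
          refine ⟨N + n, ?_⟩
          rw [show m + (N + n) = N + m + n from by omega]
          exact hn
      rw [hBeq]
      refine MeasurableSet.iInter fun m => MeasurableSet.iUnion fun n => ?_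
      exact hsub (N + m + n) (by omega) _ (hAm (N + m + n))
    rcases htriv B hBtail with h | h
    · left; rw [measure_congr hBA]; exact h
    · right; rw [measure_congr hBA]; exact h
  -- apply to the level sets of the density
  have hint : ∫⁻ x, g 0 x ∂μ = 1 := by
    have : ν Set.univ = 1 := measure_univ
    rw [hgd 0, withDensity_apply _ MeasurableSet.univ, setLIntegral_univ] at this
    exact this
  have hμ0 : (μ : Measure (S → E)) ≠ 0 := IsProbabilityMeasure.ne_zero μ
  have hgt : μ (g 0 ⁻¹' Set.Ioi 1) = 0 ∨ μ (g 0 ⁻¹' Set.Ioi 1) = 1 := by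
    refine tail01 (fun n => g n ⁻¹' Set.Ioi 1)
      (fun n => hgm n measurableSet_Ioi) fun n => ?_
    filter_upwards [hae n] with x hx
    show (g n x ∈ Set.Ioi 1) = (g 0 x ∈ Set.Ioi 1)
    rw [hx]
  have hlt : μ (g 0 ⁻¹' Set.Iio 1) = 0 ∨ μ (g 0 ⁻¹' Set.Iio 1) = 1 := by
    refine tail01 (fun n => g n ⁻¹' Set.Iio 1)
      (fun n => hgm n measurableSet_Iio) fun n => ?_
    filter_upwards [hae n] with x hx
    show (g n x ∈ Set.Iio 1) = (g 0 x ∈ Set.Iio 1)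
    rw [hx]
  have hgt0 : μ (g 0 ⁻¹' Set.Ioi 1) = 0 := by
    rcases hgt with h | h
    · exact h
    · exfalso
      have hael : ∀ᵐ x ∂μ, (1 : ℝ≥0∞) < g 0 x := by
        rw [ae_iff]
        have : {x | ¬ (1 : ℝ≥0∞) < g 0 x} = (g 0 ⁻¹' Set.Ioi 1)ᶜ := rfl
        rw [this, measure_compl ((hgm' 0) measurableSet_Ioi) (measure_ne_top μ _), h,
          measure_univ, tsub_self]
      have := lintegral_strict_mono (f := fun _ => (1 : ℝ≥0∞)) hμ0
        (hgm' 0).aemeasurable (by simp) hael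
      rw [lintegral_one, measure_univ, hint] at this
      exact lt_irrefl _ this
  have hlt0 : μ (g 0 ⁻¹' Set.Iio 1) = 0 := by
    rcases hlt with h | h
    · exact h
    · exfalso
      have hael : ∀ᵐ x ∂μ, g 0 x < 1 := by
        rw [ae_iff]
        have : {x | ¬ g 0 x < 1} = (g 0 ⁻¹' Set.Iio 1)ᶜ := rfl
        rw [this, measure_compl ((hgm' 0) measurableSet_Iio) (measure_ne_top μ _), h,
          measure_univ, tsub_self]
      have := lintegral_strict_mono (g := fun _ => (1 : ℝ≥0∞)) hμ0
        aemeasurable_const (by rw [hint]; exact ENNReal.one_ne_top) hael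
      rw [lintegral_one, measure_univ, hint] at this
      exact lt_irrefl _ this
  have hgone : g 0 =ᵐ[μ] fun _ => (1 : ℝ≥0∞) := by
    rw [Filter.EventuallyEq, ae_iff]
    have hsub : {x | ¬ g 0 x = 1} ⊆ (g 0 ⁻¹' Set.Iio 1) ∪ (g 0 ⁻¹' Set.Ioi 1) := by
      intro x hx
      rcases lt_or_gt_of_ne hx with h | h
      · exact Or.inl h
      · exact Or.inr h
    refine le_antisymm (le_trans (measure_mono hsub) ?_) (zero_le)
    refine le_trans (measure_union_le _ _) ?_
    rw [hgt0, hlt0, add_zero]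
  rw [hgd 0, withDensity_congr_ae hgone]
  exact withDensity_one

end TailTrivImpliesEq

section ExtremeImpliesTriv

variable {E S : Type*} [MeasurableSpace E]

lemma tail_le_pi : (tailSigma E S) ≤ (MeasurableSpace.pi : MeasurableSpace (S → E)) :=
  le_trans (iInf_le _ (∅ : Finset S)) cylinderEvents_le_pi

lemma gibbs_restrict {γ : Specification E S} {μ : Measure (S → E)} (hμ : IsGibbsFor γ μ)
    {B : Set (S → E)} (hB : MeasurableSet[tailSigma E S] B) (h0 : μ B ≠ 0) :
    IsGibbsFor γ ((μ B)⁻¹ • μ.restrict B) := by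
  haveI := hμ.1
  have hBm : MeasurableSet B := tail_le_pi B hB
  have hBΛ : ∀ Λ : Finset S,
      MeasurableSet[MeasureTheory.cylinderEvents ((↑Λ : Set S)ᶜ)] B := by
    have := (MeasurableSpace.measurableSet_iInf
      (m := fun Λ : Finset S => MeasureTheory.cylinderEvents ((↑Λ : Set S)ᶜ))).1 hB
    exact this
  constructor
  · constructor
    rw [Measure.smul_apply, Measure.restrict_apply MeasurableSet.univ, Set.univ_inter,
      smul_eq_mul, ENNReal.inv_mul_cancel h0 (measure_ne_top μ B)]
  · intro Λ A hA
    rw [lintegral_smul_measure]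
    have h1 : ∫⁻ ω, γ.ker Λ ω A ∂(μ.restrict B) = μ (A ∩ B) := by
      rw [← lintegral_indicator hBm]
      have : ∀ ω, B.indicator (fun ω' => γ.ker Λ ω' A) ω = γ.ker Λ ω (A ∩ B) := by
        intro ω
        rw [ker_inter γ Λ ω A (hBΛ Λ)]
        by_cases hω : ω ∈ B <;>
          simp [Set.indicator_of_mem, Set.indicator_of_notMem, hω]
      rw [lintegral_congr this, hμ.2 Λ (A ∩ B) (hA.inter hBm)]
    rw [h1, Measure.smul_apply, Measure.restrict_apply hA, smul_eq_mul]

end ExtremeImpliesTriv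

/-- A measure `μ ∈ 𝒢(γ)` is an extreme point of the convex set `𝒢(γ)` iff
it is trivial on the tail σ-algebra `ℱ_∞`. -/
theorem extreme_iff_tail_trivial
    {E S : Type*} [Fintype E] [MeasurableSpace E] [Countable S]
    (γ : Specification E S) (μ : MeasureTheory.Measure (S → E))
    (hμ : IsGibbsFor γ μ) :
    ((∀ (ν ν' : MeasureTheory.Measure (S → E)) (α : ℝ≥0∞),
        IsGibbsFor γ ν → IsGibbsFor γ ν' → 0 < α → α < 1 →
          μ = α • ν + (1 - α) • ν' → ν = μ ∧ ν' = μ) ↔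
      (∀ B : Set (S → E), MeasurableSet[tailSigma E S] B → μ B = 0 ∨ μ B = 1)) := by
  haveI := hμ.1
  constructor
  · -- extreme → tail trivial
    intro hext B hB
    by_contra hcon
    push_neg at hcon
    obtain ⟨h0, h1⟩ := hcon
    have hBm : MeasurableSet B := tail_le_pi B hB
    have hBc : MeasurableSet[tailSigma E S] Bᶜ := MeasurableSet.compl hB
    have hμBc : μ Bᶜ = 1 - μ B := by
      rw [measure_compl hBm (measure_ne_top μ B), measure_univ]
    have hμB1 : μ B < 1 := lt_of_le_of_ne prob_le_one h1
    have h0c : μ Bᶜ ≠ 0 := by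
      rw [hμBc]
      intro h
      exact absurd (tsub_eq_zero_iff_le.1 h) (not_le.2 hμB1)
    set ν := (μ B)⁻¹ • μ.restrict B with hν
    set ν' := (μ Bᶜ)⁻¹ • μ.restrict Bᶜ with hν'
    have hgν := gibbs_restrict hμ hB h0
    have hgν' := gibbs_restrict hμ hBc h0c
    have hdec : μ = μ B • ν + (1 - μ B) • ν' := by
      rw [hν, hν', ← hμBc, smul_smul, smul_smul,
        ENNReal.mul_inv_cancel h0 (measure_ne_top μ B),
        ENNReal.mul_inv_cancel h0c (measure_ne_top μ Bᶜ), one_smul, one_smul,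
        Measure.restrict_add_restrict_compl hBm]
    obtain ⟨hνμ, _⟩ := hext ν ν' (μ B) hgν hgν' (pos_iff_ne_zero.2 h0) hμB1 hdec
    have : ν Bᶜ = μ Bᶜ := by rw [hνμ]
    rw [hν, Measure.smul_apply, Measure.restrict_apply hBm.compl, smul_eq_mul,
      Set.compl_inter_self, measure_empty, mul_zero] at this
    exact h0c this.symm
  · -- tail trivial → extreme
    intro htriv ν ν' α hν hν' hα0 hα1 hdec
    have hαne : α ≠ 0 := hα0.ne'
    have h1αne : (1 : ℝ≥0∞) - α ≠ 0 := by
      intro h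
      exact absurd (tsub_eq_zero_iff_le.1 h) (not_le.2 hα1)
    have hacν : ν ≪ μ := by
      refine Measure.AbsolutelyContinuous.mk fun s hs hs0 => ?_
      rw [hdec, Measure.add_apply, Measure.smul_apply, Measure.smul_apply,
        smul_eq_mul, smul_eq_mul] at hs0
      rcases add_eq_zero.1 hs0 with ⟨h1, _⟩
      rcases mul_eq_zero.1 h1 with h | h
      · exact absurd h hαne
      · exact h
    have hacν' : ν' ≪ μ := by
      refine Measure.AbsolutelyContinuous.mk fun s hs hs0 => ?_
      rw [hdec, Measure.add_apply, Measure.smul_apply, Measure.smul_apply,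
        smul_eq_mul, smul_eq_mul] at hs0
      rcases add_eq_zero.1 hs0 with ⟨_, h2⟩
      rcases mul_eq_zero.1 h2 with h | h
      · exact absurd h h1αne
      · exact h
    exact ⟨nu_eq_mu hμ hν hacν htriv, nu_eq_mu hμ hν' hacν' htriv⟩
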